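/- Balance maximizes M_c (Theorem 3.3): assume m ≥ 2, 1 ≤ α ≤ d, d < n and d < ⌊u/m⌋. A hash function h : Fin u → Fin m satisfies |{S ∈ S_n : cost(h,S) ≤ d}| = M_c if and only if h is balanced, i.e., a hash function hashes the maximum possible number of n-element subsets c-ideally exactly when it is balanced. -/

import Mathlib

open Finset

/-- The maximum cell load of hash function `h` on key set `S`. -/
def cost {u m : ℕ} (h : Fin u → Fin m) (S : Finset (Fin u)) : ℕ :=
  Finset.univ.sup fun k : Fin m => (S.filter fun x => h x = k).card

/-- The collection of all `n`-element subsets of the universe `Fin u`. -/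
def Sn (u n : ℕ) : Finset (Finset (Fin u)) :=
  Finset.univ.powersetCard n

/-- The maximal number of `n`-element sets any single hash function maps `c`-ideally
(i.e., with maximum cell load at most `d`). -/
def Mc (u m n d : ℕ) : ℕ :=
  Finset.univ.sup fun h : Fin u → Fin m =>
    ((Sn u n).filter fun S => cost h S ≤ d).card

/-- A family `H` of hash functions is `c`-ideal if every `n`-element set of keys is
hashed with maximum cell load at most `d` by some member of `H`. -/
def IsIdealFamily (u m n d : ℕ) (H : Finset (Fin u → Fin m)) : Prop :=
  ∀ S ∈ Sn u n, ∃ h ∈ H, cost h S ≤ d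

/-- A hash function is balanced if every fiber has cardinality `⌊u/m⌋` or `⌈u/m⌉`. -/
def IsBalanced {u m : ℕ} (h : Fin u → Fin m) : Prop :=
  ∀ k : Fin m, (Finset.univ.filter fun x => h x = k).card = u / m ∨
    (Finset.univ.filter fun x => h x = k).card = (u + m - 1) / m

lemma mem_Sn {u n : ℕ} {S : Finset (Fin u)} : S ∈ Sn u n ↔ S.card = n :=
  Finset.mem_powersetCard_univ

lemma cost_le_iff {u m d : ℕ} {h : Fin u → Fin m} {S : Finset (Fin u)} :
    cost h S ≤ d ↔ ∀ k : Fin m, (S.filter fun x => h x = k).card ≤ d := by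
  unfold cost
  rw [Finset.sup_le_iff]
  simp

lemma card_slice {u m n d : ℕ} (H : Fin u → Fin m) (x : Fin u) (i : Fin m) (hix : i ≠ H x)
    (P : Finset (Fin u)) (s t : ℕ)
    (hs : s + 1 ≤ d) (ht : t ≤ d)
    (hPk : ∀ k : Fin m, k ≠ H x → k ≠ i → (P.filter fun y => H y = k).card ≤ d)
    (hPmem : ∀ y ∈ P, H y ≠ H x ∧ H y ≠ i)
    (hn : n = 1 + P.card + s + t) :
    ((Sn u n).filter fun S => cost H S ≤ d ∧ x ∈ S ∧
        (S.filter fun y => H y ≠ H x ∧ H y ≠ i) = P ∧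
        (S.filter fun y => H y = i).card = t).card
      = ((univ.filter fun y => H y = H x).card - 1).choose s
        * (univ.filter fun y => H y = i).card.choose t := by
  classical
  set A : Finset (Fin u) := (univ.filter fun y => H y = H x).erase x with hA
  set V : Finset (Fin u) := univ.filter fun y => H y = i with hV
  have hxAf : x ∈ univ.filter fun y => H y = H x := by simp
  have hAcard : A.card = (univ.filter fun y => H y = H x).card - 1 :=
    card_erase_of_mem hxAf
  have hmemA : ∀ y ∈ A, H y = H x ∧ y ≠ x := by
    intro y hy
    simp only [hA, mem_erase, mem_filter] at hy
    exact ⟨hy.2.2, hy.1⟩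
  have hmemV : ∀ y ∈ V, H y = i := by
    intro y hy; simp only [hV, mem_filter] at hy; exact hy.2
  rw [← hAcard, ← card_powersetCard, ← card_powersetCard (n := t),
    ← Finset.card_product]
  apply Finset.card_bij'
    (i := fun S _ => ((S.filter fun y => H y = H x).erase x, S.filter fun y => H y = i))
    (j := fun q _ => insert x (P ∪ q.1 ∪ q.2))
  · -- forward maps into product
    intro S hS
    simp only [mem_filter] at hS
    obtain ⟨hSn, hcost, hxS, hproj, ht'⟩ := hS
    have hScard := mem_Sn.mp hSn
    have hxm : x ∈ S.filter fun y => H y = H x := by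
      simp [hxS]
    -- card bookkeeping
    have h1 : (S.filter fun y => H y = H x).card
        + (S.filter fun y => ¬ (H y = H x)).card = S.card :=
      card_filter_add_card_filter_not _
    have h2 : ((S.filter fun y => ¬ (H y = H x)).filter fun y => H y = i).card
        + ((S.filter fun y => ¬ (H y = H x)).filter fun y => ¬ (H y = i)).card
        = (S.filter fun y => ¬ (H y = H x)).card :=
      card_filter_add_card_filter_not _
    have e1 : (S.filter fun y => ¬ (H y = H x)).filter (fun y => H y = i)
        = S.filter fun y => H y = i := by
      rw [filter_filter]
      apply filter_congr
      intro y _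
      constructor
      · exact fun hh => hh.2
      · intro hh; exact ⟨fun hc => hix (hh ▸ hc ▸ rfl), hh⟩
    have e2 : (S.filter fun y => ¬ (H y = H x)).filter (fun y => ¬ (H y = i))
        = S.filter fun y => H y ≠ H x ∧ H y ≠ i := by
      rw [filter_filter]
    have hc1 : (S.filter fun y => H y = H x).card = s + 1 := by
      rw [e1, e2, hproj] at h2
      omega
    simp only [Finset.mem_product, mem_powersetCard]
    refine ⟨⟨?_, ?_⟩, ?_, ht'⟩
    · exact erase_subset_erase _ (filter_subset_filter _ (subset_univ S))
    · rw [card_erase_of_mem hxm, hc1]; rfl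
    · intro y hy
      simp only [mem_filter, hV] at hy ⊢
      exact ⟨mem_univ y, hy.2⟩
  · -- backward maps into slice
    intro q hq
    obtain ⟨QA, QV⟩ := q
    simp only [Finset.mem_product, mem_powersetCard] at hq
    obtain ⟨⟨hQAsub, hQAcard⟩, hQVsub, hQVcard⟩ := hq
    have hQA : ∀ y ∈ QA, H y = H x ∧ y ≠ x := fun y hy => hmemA y (hQAsub hy)
    have hQV : ∀ y ∈ QV, H y = i := fun y hy => hmemV y (hQVsub hy)
    have hxP : x ∉ P := fun hc => (hPmem x hc).1 rfl
    have hxQA : x ∉ QA := fun hc => (hQA x hc).2 rfl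
    have hxQV : x ∉ QV := fun hc => hix ((hQV x hc).symm)
    have hdPQA : Disjoint P QA := by
      rw [Finset.disjoint_left]
      intro y hyP hyQA
      exact (hPmem y hyP).1 (hQA y hyQA).1
    have hdPQV : Disjoint P QV := by
      rw [Finset.disjoint_left]
      intro y hyP hyQV
      exact (hPmem y hyP).2 (hQV y hyQV)
    have hdQAQV : Disjoint QA QV := by
      rw [Finset.disjoint_left]
      intro y hyA hyV
      exact hix ((hQV y hyV).symm.trans (hQA y hyA).1)
    have hxU : x ∉ P ∪ QA ∪ QV := by
      simp only [mem_union]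
      tauto
    have hcard : (insert x (P ∪ QA ∪ QV)).card = n := by
      rw [card_insert_of_notMem hxU, card_union_of_disjoint, card_union_of_disjoint hdPQA,
        hQAcard, hQVcard, hn]
      · ring
      · rw [Finset.disjoint_union_left]; exact ⟨hdPQV, hdQAQV⟩
    have hmemS' : ∀ y, y ∈ insert x (P ∪ QA ∪ QV) ↔ y = x ∨ y ∈ P ∨ y ∈ QA ∨ y ∈ QV := by
      intro y; simp only [mem_insert, mem_union]; tauto
    have fA : (insert x (P ∪ QA ∪ QV)).filter (fun y => H y = H x) = insert x QA := by
      ext y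
      simp only [mem_filter, hmemS', mem_insert]
      constructor
      · rintro ⟨(rfl | hyP | hyA | hyV), hHy⟩
        · exact Or.inl rfl
        · exact absurd hHy (hPmem y hyP).1
        · exact Or.inr hyA
        · exact absurd ((hQV y hyV).symm.trans hHy) hix
      · rintro (rfl | hyA)
        · exact ⟨Or.inl rfl, rfl⟩
        · exact ⟨Or.inr (Or.inr (Or.inl hyA)), (hQA y hyA).1⟩
    have fV : (insert x (P ∪ QA ∪ QV)).filter (fun y => H y = i) = QV := by
      ext y
      simp only [mem_filter, hmemS']
      constructor
      · rintro ⟨(rfl | hyP | hyA | hyV), hHy⟩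
        · exact absurd hHy (Ne.symm hix)
        · exact absurd hHy (hPmem y hyP).2
        · exact absurd (hHy.symm.trans (hQA y hyA).1) hix
        · exact hyV
      · intro hyV
        exact ⟨Or.inr (Or.inr (Or.inr hyV)), hQV y hyV⟩
    have fP : (insert x (P ∪ QA ∪ QV)).filter (fun y => H y ≠ H x ∧ H y ≠ i) = P := by
      ext y
      simp only [mem_filter, hmemS']
      constructor
      · rintro ⟨(rfl | hyP | hyA | hyV), hHy⟩
        · exact absurd rfl hHy.1
        · exact hyP
        · exact absurd (hQA y hyA).1 hHy.1
        · exact absurd (hQV y hyV) hHy.2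
      · intro hyP
        exact ⟨Or.inr (Or.inl hyP), hPmem y hyP⟩
    have fk : ∀ k : Fin m, k ≠ H x → k ≠ i →
        (insert x (P ∪ QA ∪ QV)).filter (fun y => H y = k) = P.filter (fun y => H y = k) := by
      intro k hk1 hk2
      ext y
      simp only [mem_filter, hmemS']
      constructor
      · rintro ⟨(rfl | hyP | hyA | hyV), hHy⟩
        · exact absurd hHy.symm hk1
        · exact ⟨hyP, hHy⟩
        · exact absurd (hHy.symm.trans (hQA y hyA).1) hk1
        · exact absurd (hHy.symm.trans (hQV y hyV)) hk2
      · rintro ⟨hyP, hHy⟩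
        exact ⟨Or.inr (Or.inl hyP), hHy⟩
    simp only [mem_filter]
    refine ⟨mem_Sn.mpr hcard, ?_, mem_insert_self _ _, fP, by rw [fV, hQVcard]⟩
    · rw [cost_le_iff]
      intro k
      by_cases hk1 : k = H x
      · subst hk1
        rw [fA, card_insert_of_notMem hxQA, hQAcard]
        exact hs
      · by_cases hk2 : k = i
        · subst hk2
          rw [fV, hQVcard]
          exact ht
        · rw [fk k hk1 hk2]
          exact hPk k hk1 hk2
  · -- left inverse
    intro S hS
    simp only [mem_filter] at hS
    obtain ⟨hSn, hcost, hxS, hproj, ht'⟩ := hS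
    apply Finset.Subset.antisymm
    · apply insert_subset hxS
      apply union_subset (union_subset ?_ ?_) ?_
      · rw [← hproj]; exact filter_subset _ _
      · exact (erase_subset _ _).trans (filter_subset _ _)
      · exact filter_subset _ _
    · intro y hy
      rw [mem_insert, mem_union, mem_union]
      by_cases hyx : y = x
      · exact Or.inl hyx
      · by_cases h1 : H y = H x
        · exact Or.inr (Or.inl (Or.inr (mem_erase.mpr ⟨hyx, mem_filter.mpr ⟨hy, h1⟩⟩)))
        · by_cases h2 : H y = i
          · exact Or.inr (Or.inr (mem_filter.mpr ⟨hy, h2⟩))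
          · exact Or.inr (Or.inl (Or.inl (hproj ▸ mem_filter.mpr ⟨hy, h1, h2⟩)))
  · -- right inverse
    intro q hq
    obtain ⟨QA, QV⟩ := q
    simp only [Finset.mem_product, mem_powersetCard] at hq
    obtain ⟨⟨hQAsub, hQAcard⟩, hQVsub, hQVcard⟩ := hq
    have hQA : ∀ y ∈ QA, H y = H x ∧ y ≠ x := fun y hy => hmemA y (hQAsub hy)
    have hQV : ∀ y ∈ QV, H y = i := fun y hy => hmemV y (hQVsub hy)
    have hxP : x ∉ P := fun hc => (hPmem x hc).1 rfl
    have hxQA : x ∉ QA := fun hc => (hQA x hc).2 rfl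
    have hmemS' : ∀ y, y ∈ insert x (P ∪ QA ∪ QV) ↔ y = x ∨ y ∈ P ∨ y ∈ QA ∨ y ∈ QV := by
      intro y; simp only [mem_insert, mem_union]; tauto
    have fA : (insert x (P ∪ QA ∪ QV)).filter (fun y => H y = H x) = insert x QA := by
      ext y
      simp only [mem_filter, hmemS', mem_insert]
      constructor
      · rintro ⟨(rfl | hyP | hyA | hyV), hHy⟩
        · exact Or.inl rfl
        · exact absurd hHy (hPmem y hyP).1
        · exact Or.inr hyA
        · exact absurd ((hQV y hyV).symm.trans hHy) hix
      · rintro (rfl | hyA)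
        · exact ⟨Or.inl rfl, rfl⟩
        · exact ⟨Or.inr (Or.inr (Or.inl hyA)), (hQA y hyA).1⟩
    have fV : (insert x (P ∪ QA ∪ QV)).filter (fun y => H y = i) = QV := by
      ext y
      simp only [mem_filter, hmemS']
      constructor
      · rintro ⟨(rfl | hyP | hyA | hyV), hHy⟩
        · exact absurd hHy (Ne.symm hix)
        · exact absurd hHy (hPmem y hyP).2
        · exact absurd (hHy.symm.trans (hQA y hyA).1) hix
        · exact hyV
      · intro hyV
        exact ⟨Or.inr (Or.inr (Or.inr hyV)), hQV y hyV⟩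
    rw [Prod.ext_iff]
    constructor
    · simp only [fA]
      exact Finset.erase_insert hxQA
    · simp only [fV]


lemma choose_mul_mono {x y : ℕ} (hyx : y ≤ x) {e f : ℕ} (hef : e ≤ f) :
    x.choose e * y.choose f ≤ x.choose f * y.choose e := by
  induction f, hef using Nat.le_induction with
  | base => exact le_refl _
  | succ f hef ih =>
    have key : x.choose e * y.choose (f+1) * (f+1) ≤ x.choose (f+1) * y.choose e * (f+1) := by
      calc x.choose e * y.choose (f+1) * (f+1) = x.choose e * (y.choose (f+1) * (f+1)) := by ring
        _ = x.choose e * (y.choose f * (y - f)) := by rw [Nat.choose_succ_right_eq]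
        _ = x.choose e * y.choose f * (y - f) := by ring
        _ ≤ x.choose f * y.choose e * (y - f) := Nat.mul_le_mul_right _ ih
        _ ≤ x.choose f * y.choose e * (x - f) := Nat.mul_le_mul_left _ (Nat.sub_le_sub_right hyx f)
        _ = x.choose f * (x - f) * y.choose e := by ring
        _ = x.choose (f+1) * (f+1) * y.choose e := by rw [Nat.choose_succ_right_eq]
        _ = x.choose (f+1) * y.choose e * (f+1) := by ring
    exact Nat.le_of_mul_le_mul_right key (Nat.succ_pos f)

lemma choose_mul_strict {x y e f : ℕ} (hef : e < f) (hfy : f ≤ y) (hyx : y < x) :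
    x.choose e * y.choose f < x.choose f * y.choose e := by
  obtain ⟨f, rfl⟩ : ∃ f', f = f' + 1 := ⟨f - 1, by omega⟩
  have hef' : e ≤ f := by omega
  have hpos : 0 < x.choose f * y.choose e :=
    Nat.mul_pos (Nat.choose_pos (by omega)) (Nat.choose_pos (by omega))
  have key : x.choose e * y.choose (f+1) * (f+1) < x.choose (f+1) * y.choose e * (f+1) := by
    calc x.choose e * y.choose (f+1) * (f+1) = x.choose e * (y.choose (f+1) * (f+1)) := by ring
      _ = x.choose e * (y.choose f * (y - f)) := by rw [Nat.choose_succ_right_eq]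
      _ = x.choose e * y.choose f * (y - f) := by ring
      _ ≤ x.choose f * y.choose e * (y - f) := Nat.mul_le_mul_right _ (choose_mul_mono (le_of_lt hyx) hef')
      _ < x.choose f * y.choose e * (x - f) := by
          have hlt : y - f < x - f := by omega
          exact (mul_lt_mul_iff_right₀ hpos).mpr hlt
      _ = x.choose f * (x - f) * y.choose e := by ring
      _ = x.choose (f+1) * (f+1) * y.choose e := by rw [Nat.choose_succ_right_eq]
      _ = x.choose (f+1) * y.choose e * (f+1) := by ring
  exact Nat.lt_of_mul_lt_mul_right key

section Exchange

variable {u m n d : ℕ} {h : Fin u → Fin m} {i j : Fin m} {x : Fin u}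

lemma update_filter_j (hij : i ≠ j) (hx : h x = i) {T : Finset (Fin u)} (hxT : x ∈ T) :
    (T.filter fun y => Function.update h x j y = j)
      = insert x (T.filter fun y => h y = j) := by
  ext y
  rcases eq_or_ne y x with rfl | hyx
  · simp [Function.update_self, hxT]
  · simp [Function.update_of_ne hyx, hyx]

lemma update_filter_i (hij : i ≠ j) (hx : h x = i) {T : Finset (Fin u)} :
    (T.filter fun y => Function.update h x j y = i)
      = (T.filter fun y => h y = i).erase x := by
  ext y
  rcases eq_or_ne y x with rfl | hyx
  · simp [Function.update_self, hij.symm]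
  · simp [Function.update_of_ne hyx, hyx]

lemma update_filter_k (hij : i ≠ j) (hx : h x = i) {k : Fin m} (hk1 : k ≠ i) (hk2 : k ≠ j)
    (T : Finset (Fin u)) :
    (T.filter fun y => Function.update h x j y = k) = T.filter fun y => h y = k := by
  ext y
  rcases eq_or_ne y x with rfl | hyx
  · simp [Function.update_self, hk2.symm, hx, hk1.symm]
  · simp [Function.update_of_ne hyx]

lemma update_filter_proj (hij : i ≠ j) (hx : h x = i) (T : Finset (Fin u)) :
    (T.filter fun y => Function.update h x j y ≠ j ∧ Function.update h x j y ≠ i)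
      = T.filter fun y => h y ≠ i ∧ h y ≠ j := by
  ext y
  rcases eq_or_ne y x with rfl | hyx
  · simp [Function.update_self, hx]
  · simp only [mem_filter, Function.update_of_ne hyx]
    tauto

lemma update_filter_notmem (hij : i ≠ j) (hx : h x = i) {T : Finset (Fin u)} (hxT : x ∉ T)
    (k : Fin m) :
    (T.filter fun y => Function.update h x j y = k) = T.filter fun y => h y = k := by
  apply filter_congr
  intro y hy
  rw [Function.update_of_ne (fun hc => hxT (by rw [← hc]; exact hy))]

lemma mem_X_iff (hij : i ≠ j) (hx : h x = i) {S : Finset (Fin u)} :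
    S ∈ ((Sn u n).filter fun S => cost h S ≤ d) \
        ((Sn u n).filter fun S => cost (Function.update h x j) S ≤ d)
      ↔ S ∈ Sn u n ∧ cost h S ≤ d ∧ x ∈ S ∧ (S.filter fun y => h y = j).card = d := by
  have hxj : x ∉ S.filter fun y => h y = j := by
    simp [hx, hij]
  constructor
  · rintro hS
    rw [mem_sdiff, mem_filter, mem_filter] at hS
    obtain ⟨⟨hSn, hcost⟩, hnot⟩ := hS
    have hcost' : ¬ cost (Function.update h x j) S ≤ d := fun hc => hnot ⟨hSn, hc⟩
    have hxS : x ∈ S := by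
      by_contra hxS
      apply hcost'
      rw [cost_le_iff] at hcost ⊢
      intro k
      rw [update_filter_notmem hij hx hxS]
      exact hcost k
    refine ⟨hSn, hcost, hxS, ?_⟩
    rw [cost_le_iff] at hcost
    rw [cost_le_iff] at hcost'
    push_neg at hcost'
    obtain ⟨k, hk⟩ := hcost'
    have hkj : k = j := by
      by_contra hkj
      rcases eq_or_ne k i with rfl | hki
      · rw [update_filter_i hij hx] at hk
        exact absurd (le_trans (card_le_card (erase_subset _ _)) (hcost k)) (not_le.mpr hk)
      · rw [update_filter_k hij hx hki hkj] at hk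
        exact absurd (hcost k) (not_le.mpr hk)
    rw [hkj] at hk
    rw [update_filter_j hij hx hxS, card_insert_of_notMem hxj] at hk
    have := hcost j
    omega
  · rintro ⟨hSn, hcost, hxS, hcard⟩
    rw [mem_sdiff, mem_filter, mem_filter]
    refine ⟨⟨hSn, hcost⟩, ?_⟩
    rintro ⟨-, hcost'⟩
    rw [cost_le_iff] at hcost'
    have := hcost' j
    rw [update_filter_j hij hx hxS, card_insert_of_notMem hxj, hcard] at this
    omega

lemma mem_Y_iff (hij : i ≠ j) (hx : h x = i) {S : Finset (Fin u)} :
    S ∈ ((Sn u n).filter fun S => cost (Function.update h x j) S ≤ d) \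
        ((Sn u n).filter fun S => cost h S ≤ d)
      ↔ S ∈ Sn u n ∧ cost (Function.update h x j) S ≤ d ∧ x ∈ S ∧
          (S.filter fun y => Function.update h x j y = i).card = d := by
  constructor
  · rintro hS
    rw [mem_sdiff, mem_filter, mem_filter] at hS
    obtain ⟨⟨hSn, hcost⟩, hnot⟩ := hS
    have hcost' : ¬ cost h S ≤ d := fun hc => hnot ⟨hSn, hc⟩
    have hxS : x ∈ S := by
      by_contra hxS
      apply hcost'
      rw [cost_le_iff] at hcost ⊢
      intro k
      rw [← update_filter_notmem hij hx hxS]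
      exact hcost k
    have hxi : x ∈ S.filter fun y => h y = i := by simp [hxS, hx]
    refine ⟨hSn, hcost, hxS, ?_⟩
    rw [cost_le_iff] at hcost
    rw [cost_le_iff] at hcost'
    push_neg at hcost'
    obtain ⟨k, hk⟩ := hcost'
    have hki : k = i := by
      by_contra hki
      rcases eq_or_ne k j with hkj | hkj
      · have hkk := hcost j
        rw [update_filter_j hij hx hxS, card_insert_of_notMem (by simp [hx, hij])] at hkk
        rw [hkj] at hk
        have hsub : (S.filter fun y => h y = j).card ≤ (insert x (S.filter fun y => h y = j)).card :=
          card_le_card (subset_insert _ _)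
        rw [card_insert_of_notMem (by simp [hx, hij])] at hsub
        omega
      · rw [← update_filter_k hij hx hki hkj] at hk
        exact absurd (hcost k) (not_le.mpr hk)
    rw [hki] at hk
    have hfi : (S.filter fun y => h y = i).card
        = (S.filter fun y => Function.update h x j y = i).card + 1 := by
      rw [update_filter_i hij hx, card_erase_of_mem hxi]
      have : 0 < (S.filter fun y => h y = i).card := card_pos.mpr ⟨x, hxi⟩
      omega
    have := hcost i
    omega
  · rintro ⟨hSn, hcost, hxS, hcard⟩
    rw [mem_sdiff, mem_filter, mem_filter]
    refine ⟨⟨hSn, hcost⟩, ?_⟩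
    rintro ⟨-, hcost'⟩
    rw [cost_le_iff] at hcost'
    have hxi : x ∈ S.filter fun y => h y = i := by simp [hxS, hx]
    have := hcost' i
    have hfi : (S.filter fun y => h y = i).card
        = (S.filter fun y => Function.update h x j y = i).card + 1 := by
      rw [update_filter_i hij hx, card_erase_of_mem hxi]
      have : 0 < (S.filter fun y => h y = i).card := card_pos.mpr ⟨x, hxi⟩
      omega
    omega

end Exchange

section Exchange2

variable {u m n d : ℕ} {h : Fin u → Fin m} {i j : Fin m} {x : Fin u}

lemma X_P_eq (hij : i ≠ j) (hx : h x = i) (P : Finset (Fin u)) :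
    ((((Sn u n).filter fun S => cost h S ≤ d) \
        ((Sn u n).filter fun S => cost (Function.update h x j) S ≤ d)).filter
      fun S => (S.filter fun y => h y ≠ i ∧ h y ≠ j) = P)
    = (Sn u n).filter fun S => cost h S ≤ d ∧ x ∈ S ∧
        (S.filter fun y => h y ≠ h x ∧ h y ≠ j) = P ∧
        (S.filter fun y => h y = j).card = d := by
  ext S
  rw [mem_filter, mem_filter, mem_X_iff hij hx, hx]
  tauto

lemma Y_P_eq (hij : i ≠ j) (hx : h x = i) (P : Finset (Fin u)) :
    ((((Sn u n).filter fun S => cost (Function.update h x j) S ≤ d) \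
        ((Sn u n).filter fun S => cost h S ≤ d)).filter
      fun S => (S.filter fun y => h y ≠ i ∧ h y ≠ j) = P)
    = (Sn u n).filter fun S => cost (Function.update h x j) S ≤ d ∧ x ∈ S ∧
        (S.filter fun y => Function.update h x j y ≠ Function.update h x j x ∧
          Function.update h x j y ≠ i) = P ∧
        (S.filter fun y => Function.update h x j y = i).card = d := by
  ext S
  rw [mem_filter, mem_filter, mem_Y_iff hij hx]
  simp only [Function.update_self]
  rw [update_filter_proj hij hx]
  tauto

lemma X_P_card (hij : i ≠ j) (hx : h x = i) (P : Finset (Fin u)) (s : ℕ)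
    (hs : s + 1 ≤ d)
    (hPk : ∀ k : Fin m, k ≠ i → k ≠ j → (P.filter fun y => h y = k).card ≤ d)
    (hPmem : ∀ y ∈ P, h y ≠ i ∧ h y ≠ j)
    (hn : n = 1 + P.card + s + d) :
    ((((Sn u n).filter fun S => cost h S ≤ d) \
        ((Sn u n).filter fun S => cost (Function.update h x j) S ≤ d)).filter
      fun S => (S.filter fun y => h y ≠ i ∧ h y ≠ j) = P).card
    = ((univ.filter fun y => h y = i).card - 1).choose s
        * (univ.filter fun y => h y = j).card.choose d := by
  rw [X_P_eq hij hx P]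
  rw [card_slice h x j (by rw [hx]; exact hij.symm) P s d hs le_rfl
    (by rw [hx]; intro k hk1 hk2; exact hPk k hk1 hk2)
    (by rw [hx]; exact hPmem) hn]
  rw [hx]

lemma Y_P_card (hij : i ≠ j) (hx : h x = i) (P : Finset (Fin u)) (s : ℕ)
    (hs : s + 1 ≤ d)
    (hPk : ∀ k : Fin m, k ≠ i → k ≠ j → (P.filter fun y => h y = k).card ≤ d)
    (hPmem : ∀ y ∈ P, h y ≠ i ∧ h y ≠ j)
    (hn : n = 1 + P.card + s + d) :
    ((((Sn u n).filter fun S => cost (Function.update h x j) S ≤ d) \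
        ((Sn u n).filter fun S => cost h S ≤ d)).filter
      fun S => (S.filter fun y => h y ≠ i ∧ h y ≠ j) = P).card
    = (univ.filter fun y => h y = j).card.choose s
        * (((univ.filter fun y => h y = i).card - 1)).choose d := by
  have hxP : x ∉ P := fun hc => (hPmem x hc).1 hx
  rw [Y_P_eq hij hx P]
  have hPk' : ∀ k : Fin m, k ≠ Function.update h x j x → k ≠ i →
      (P.filter fun y => Function.update h x j y = k).card ≤ d := by
    simp only [Function.update_self]
    intro k hk1 hk2
    rw [update_filter_notmem hij hx hxP]
    exact hPk k hk2 hk1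
  have hPmem' : ∀ y ∈ P, Function.update h x j y ≠ Function.update h x j x ∧
      Function.update h x j y ≠ i := by
    simp only [Function.update_self]
    intro y hy
    have hyx : y ≠ x := fun hc => hxP (hc ▸ hy)
    rw [Function.update_of_ne hyx]
    exact ⟨(hPmem y hy).2, (hPmem y hy).1⟩
  rw [card_slice (Function.update h x j) x i
    (by simp only [Function.update_self]; exact hij) P s d hs le_rfl hPk' hPmem' hn]
  have e1 : (univ.filter fun y => Function.update h x j y = Function.update h x j x)
      = insert x (univ.filter fun y => h y = j) := by
    simp only [Function.update_self]
    exact update_filter_j hij hx (mem_univ x)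
  have e2 : (univ.filter fun y => Function.update h x j y = i)
      = (univ.filter fun y => h y = i).erase x := update_filter_i hij hx
  have hxj : x ∉ univ.filter fun y => h y = j := by simp [hx, hij]
  have hxi : x ∈ univ.filter fun y => h y = i := by simp [hx]
  rw [e1, e2, card_insert_of_notMem hxj, card_erase_of_mem hxi]
  simp

end Exchange2

section Exchange3

variable {u m n d : ℕ} {h : Fin u → Fin m} {i j : Fin m} {x : Fin u}

lemma good_decomp (hij : i ≠ j) {S : Finset (Fin u)} (hSn : S ∈ Sn u n) :
    (S.filter fun y => h y = i).card + (S.filter fun y => h y = j).card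
      + (S.filter fun y => h y ≠ i ∧ h y ≠ j).card = n := by
  have h1 : (S.filter fun y => h y = i).card
      + (S.filter fun y => ¬ (h y = i)).card = S.card :=
    card_filter_add_card_filter_not _
  have h2 : ((S.filter fun y => ¬ (h y = i)).filter fun y => h y = j).card
      + ((S.filter fun y => ¬ (h y = i)).filter fun y => ¬ (h y = j)).card
      = (S.filter fun y => ¬ (h y = i)).card :=
    card_filter_add_card_filter_not _
  have e1 : (S.filter fun y => ¬ (h y = i)).filter (fun y => h y = j)
      = S.filter fun y => h y = j := by
    rw [filter_filter]
    apply filter_congr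
    intro y _
    constructor
    · exact fun hh => hh.2
    · intro hh; exact ⟨fun hc => hij (hc.symm.trans hh), hh⟩
  have e2 : (S.filter fun y => ¬ (h y = i)).filter (fun y => ¬ (h y = j))
      = S.filter fun y => h y ≠ i ∧ h y ≠ j := by
    rw [filter_filter]
  rw [e1, e2] at h2
  rw [mem_Sn] at hSn
  omega

lemma X_P_le_Y_P (hij : i ≠ j) (hx : h x = i)
    (hab : (univ.filter fun y => h y = j).card + 2 ≤ (univ.filter fun y => h y = i).card)
    (P : Finset (Fin u)) :
    ((((Sn u n).filter fun S => cost h S ≤ d) \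
        ((Sn u n).filter fun S => cost (Function.update h x j) S ≤ d)).filter
      fun S => (S.filter fun y => h y ≠ i ∧ h y ≠ j) = P).card
    ≤ ((((Sn u n).filter fun S => cost (Function.update h x j) S ≤ d) \
        ((Sn u n).filter fun S => cost h S ≤ d)).filter
      fun S => (S.filter fun y => h y ≠ i ∧ h y ≠ j) = P).card := by
  rcases Finset.eq_empty_or_nonempty ((((Sn u n).filter fun S => cost h S ≤ d) \
        ((Sn u n).filter fun S => cost (Function.update h x j) S ≤ d)).filter
      fun S => (S.filter fun y => h y ≠ i ∧ h y ≠ j) = P) with he | ⟨S₀, hS₀⟩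
  · simp [he]
  · rw [mem_filter] at hS₀
    obtain ⟨hX, hproj⟩ := hS₀
    rw [mem_X_iff hij hx] at hX
    obtain ⟨hSn, hcost, hxS, hj⟩ := hX
    rw [cost_le_iff] at hcost
    have hxi : x ∈ S₀.filter fun y => h y = i := by simp [hxS, hx]
    have hc1pos : 0 < (S₀.filter fun y => h y = i).card := card_pos.mpr ⟨x, hxi⟩
    have hc1le : (S₀.filter fun y => h y = i).card ≤ d := hcost i
    set s := (S₀.filter fun y => h y = i).card - 1 with hsdef
    have hdec := good_decomp (h := h) hij hSn
    rw [hj, hproj] at hdec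
    have hs : s + 1 ≤ d := by omega
    have hn' : n = 1 + P.card + s + d := by omega
    have hPk : ∀ k : Fin m, k ≠ i → k ≠ j → (P.filter fun y => h y = k).card ≤ d := by
      intro k _ _
      refine le_trans (card_le_card ?_) (hcost k)
      intro y hy
      rw [mem_filter] at hy ⊢
      rw [← hproj, mem_filter] at hy
      exact ⟨hy.1.1, hy.2⟩
    have hPmem : ∀ y ∈ P, h y ≠ i ∧ h y ≠ j := by
      intro y hy
      rw [← hproj, mem_filter] at hy
      exact hy.2
    rw [X_P_card hij hx P s hs hPk hPmem hn', Y_P_card hij hx P s hs hPk hPmem hn']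
    rw [mul_comm ((univ.filter fun y => h y = j).card.choose s)]
    exact choose_mul_mono (by omega) (by omega)

lemma exists_P_strict (hij : i ≠ j) (hx : h x = i)
    (hab : (univ.filter fun y => h y = j).card + 2 ≤ (univ.filter fun y => h y = i).card)
    (had : d < (univ.filter fun y => h y = i).card)
    (hd1 : 1 ≤ d) (hdn : d + 1 ≤ n)
    {S₀ : Finset (Fin u)} (hS₀ : S₀ ∈ (Sn u n).filter fun S => cost h S ≤ d) :
    ∃ P : Finset (Fin u),
    ((((Sn u n).filter fun S => cost h S ≤ d) \
        ((Sn u n).filter fun S => cost (Function.update h x j) S ≤ d)).filter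
      fun S => (S.filter fun y => h y ≠ i ∧ h y ≠ j) = P).card
    < ((((Sn u n).filter fun S => cost (Function.update h x j) S ≤ d) \
        ((Sn u n).filter fun S => cost h S ≤ d)).filter
      fun S => (S.filter fun y => h y ≠ i ∧ h y ≠ j) = P).card := by
  rw [mem_filter] at hS₀
  obtain ⟨hSn, hcost⟩ := hS₀
  rw [cost_le_iff] at hcost
  have hsA : (S₀.filter fun y => h y = i).card ≤ d := hcost i
  have hsB : (S₀.filter fun y => h y = j).card ≤ d := hcost j
  have hsBb : (S₀.filter fun y => h y = j).card ≤ (univ.filter fun y => h y = j).card :=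
    card_le_card (filter_subset_filter _ (subset_univ _))
  have hdec := good_decomp (h := h) hij hSn
  set sA := (S₀.filter fun y => h y = i).card
  set sB := (S₀.filter fun y => h y = j).card
  set P₀ := S₀.filter fun y => h y ≠ i ∧ h y ≠ j with hP₀
  set e := sA + sB - (d + 1) with he
  have hsize : n - (1 + d + e) ≤ P₀.card := by omega
  obtain ⟨P, hPsub, hPcard⟩ := Finset.exists_subset_card_eq hsize
  have hs : e + 1 ≤ d := by omega
  have hn' : n = 1 + P.card + e + d := by omega
  have heb : e ≤ (univ.filter fun y => h y = j).card := by omega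
  have hPk : ∀ k : Fin m, k ≠ i → k ≠ j → (P.filter fun y => h y = k).card ≤ d := by
    intro k _ _
    refine le_trans (card_le_card ?_) (hcost k)
    intro y hy
    rw [mem_filter] at hy ⊢
    have := hPsub hy.1
    rw [hP₀, mem_filter] at this
    exact ⟨this.1, hy.2⟩
  have hPmem : ∀ y ∈ P, h y ≠ i ∧ h y ≠ j := by
    intro y hy
    have := hPsub hy
    rw [hP₀, mem_filter] at this
    exact this.2
  refine ⟨P, ?_⟩
  rw [X_P_card hij hx P e hs hPk hPmem hn', Y_P_card hij hx P e hs hPk hPmem hn']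
  rcases le_or_gt d ((univ.filter fun y => h y = j).card) with hdb | hdb
  · rw [mul_comm ((univ.filter fun y => h y = j).card.choose e)]
    exact choose_mul_strict (by omega) hdb (by omega)
  · rw [Nat.choose_eq_zero_of_lt hdb, mul_zero]
    exact Nat.mul_pos (Nat.choose_pos heb) (Nat.choose_pos (by omega))

lemma count_lt_exchange (hij : i ≠ j) (hx : h x = i)
    (hab : (univ.filter fun y => h y = j).card + 2 ≤ (univ.filter fun y => h y = i).card)
    (had : d < (univ.filter fun y => h y = i).card)
    (hd1 : 1 ≤ d) (hdn : d + 1 ≤ n)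
    (hne : ((Sn u n).filter fun S => cost h S ≤ d).Nonempty) :
    ((Sn u n).filter fun S => cost h S ≤ d).card
      < ((Sn u n).filter fun S => cost (Function.update h x j) S ≤ d).card := by
  classical
  set G1 := (Sn u n).filter fun S => cost h S ≤ d with hG1
  set G2 := (Sn u n).filter fun S => cost (Function.update h x j) S ≤ d with hG2
  have hXsum : (G1 \ G2).card
      = ∑ P ∈ (univ : Finset (Fin u)).powerset,
          ((G1 \ G2).filter fun S => (S.filter fun y => h y ≠ i ∧ h y ≠ j) = P).card :=
    card_eq_sum_card_fiberwise (fun S _ => mem_powerset.mpr (subset_univ _))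
  have hYsum : (G2 \ G1).card
      = ∑ P ∈ (univ : Finset (Fin u)).powerset,
          ((G2 \ G1).filter fun S => (S.filter fun y => h y ≠ i ∧ h y ≠ j) = P).card :=
    card_eq_sum_card_fiberwise (fun S _ => mem_powerset.mpr (subset_univ _))
  obtain ⟨S₀, hS₀⟩ := hne
  obtain ⟨P, hP⟩ := exists_P_strict hij hx hab had hd1 hdn hS₀
  have hlt : (G1 \ G2).card < (G2 \ G1).card := by
    rw [hXsum, hYsum]
    apply Finset.sum_lt_sum
    · intro Q _
      exact X_P_le_Y_P hij hx hab Q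
    · exact ⟨P, mem_powerset.mpr (subset_univ _), hP⟩
  have h1 : (G1 ∩ G2).card + (G1 \ G2).card = G1.card := card_inter_add_card_sdiff G1 G2
  have h2 : (G2 ∩ G1).card + (G2 \ G1).card = G2.card := card_inter_add_card_sdiff G2 G1
  rw [inter_comm] at h2
  omega

end Exchange3

lemma count_eq_of_fibers {u m n d : ℕ} (h₁ h₂ : Fin u → Fin m) (π : Fin m ≃ Fin m)
    (hc : ∀ k, (univ.filter fun y => h₁ y = π k).card = (univ.filter fun y => h₂ y = k).card) :
    ((Sn u n).filter fun S => cost h₁ S ≤ d).card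
      = ((Sn u n).filter fun S => cost h₂ S ≤ d).card := by
  classical
  have e : ∀ k : Fin m, {y // h₂ y = k} ≃ {y // h₁ y = π k} := fun k =>
    Fintype.equivOfCardEq (by
      rw [Fintype.card_subtype, Fintype.card_subtype, hc k])
  let σ : Fin u ≃ Fin u :=
    (Equiv.sigmaFiberEquiv h₂).symm.trans
      ((Equiv.sigmaCongr π e).trans (Equiv.sigmaFiberEquiv h₁))
  have hσ : ∀ y, h₁ (σ y) = π (h₂ y) := fun y => ((e (h₂ y)) ⟨y, rfl⟩).2
  have hcost : ∀ S : Finset (Fin u), cost h₁ (S.image σ) = cost h₂ S := by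
    intro S
    have hcard : ∀ k' : Fin m, ((S.image σ).filter fun y => h₁ y = k').card
        = (S.filter fun y => h₂ y = π.symm k').card := by
      intro k'
      rw [Finset.filter_image]
      rw [Finset.card_image_of_injective _ σ.injective]
      congr 1
      apply filter_congr
      intro y _
      simp only [Function.comp, hσ y]
      rw [← Equiv.eq_symm_apply]
    unfold cost
    apply le_antisymm
    · apply Finset.sup_le
      intro k' _
      rw [hcard k']
      exact Finset.le_sup (f := fun k : Fin m => (S.filter fun y => h₂ y = k).card)
        (mem_univ (π.symm k'))
    · apply Finset.sup_le
      intro k _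
      have hck := hcard (π k)
      rw [Equiv.symm_apply_apply] at hck
      rw [← hck]
      exact Finset.le_sup (f := fun k : Fin m => (((S.image σ)).filter fun y => h₁ y = k).card)
        (mem_univ (π k))
  apply Finset.card_bij' (i := fun S _ => S.image σ.symm) (j := fun S _ => S.image σ)
  · intro S _
    rw [Finset.image_image]
    simp
  · intro S _
    rw [Finset.image_image]
    simp
  · intro S hS
    rw [mem_filter] at hS ⊢
    constructor
    · rw [mem_Sn, Finset.card_image_of_injective _ σ.symm.injective, ← mem_Sn]
      exact hS.1
    · have : S = (S.image σ.symm).image σ := by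
        rw [Finset.image_image]
        simp
      rw [← hcost (S.image σ.symm), ← this]
      exact hS.2
  · intro S hS
    rw [mem_filter] at hS ⊢
    constructor
    · rw [mem_Sn, Finset.card_image_of_injective _ σ.injective, ← mem_Sn]
      exact hS.1
    · rw [hcost S]
      exact hS.2

lemma fiber_sum {u m : ℕ} (h : Fin u → Fin m) :
    ∑ k : Fin m, (univ.filter fun y => h y = k).card = u := by
  have := Finset.card_eq_sum_card_fiberwise (f := h) (s := univ) (t := univ)
    (fun y _ => mem_univ (h y))
  rw [card_univ, Fintype.card_fin] at this
  exact this.symm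

/-- ceiling is floor or floor+1 -/
lemma ceil_cases (u m : ℕ) (hm : 0 < m) :
    (u + m - 1) / m = u / m ∨ (u + m - 1) / m = u / m + 1 := by
  have hmod := Nat.div_add_mod u m
  have hmlt : u % m < m := Nat.mod_lt _ hm
  rcases Nat.eq_zero_or_pos (u % m) with hr | hr
  · left
    have he : u + m - 1 = (m - 1) + m * (u / m) := by omega
    rw [he, Nat.add_mul_div_left _ _ hm, Nat.div_eq_of_lt (by omega)]
    omega
  · right
    have he : u + m - 1 = (u % m + m - 1) + m * (u / m) := by omega
    rw [he, Nat.add_mul_div_left _ _ hm]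
    have h1 : (u % m + m - 1) / m = 1 := by
      apply Nat.div_eq_of_lt_le <;> omega
    omega

lemma balanced_of_tight {u m : ℕ} (hm : 0 < m) (h : Fin u → Fin m) (v : ℕ)
    (hv : ∀ k : Fin m, v ≤ (univ.filter fun y => h y = k).card ∧
      (univ.filter fun y => h y = k).card ≤ v + 1) :
    IsBalanced h := by
  obtain ⟨m', rfl⟩ : ∃ m', m = m' + 1 := ⟨m - 1, by omega⟩
  intro k
  set f : Fin (m' + 1) → ℕ := fun k => (univ.filter fun y => h y = k).card with hf
  have hsum : ∑ k', f k' = u := fiber_sum h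
  have hcardu : (univ : Finset (Fin (m' + 1))).card = m' + 1 := by
    rw [card_univ, Fintype.card_fin]
  have hers : (univ.erase k).card = m' := by
    rw [card_erase_of_mem (mem_univ k), hcardu]
    omega
  have hsplit : f k + ∑ k' ∈ univ.erase k, f k' = u := by
    rw [Finset.add_sum_erase _ _ (mem_univ k)]; exact hsum
  have hlow : m' * v ≤ ∑ k' ∈ univ.erase k, f k' := by
    have := Finset.card_nsmul_le_sum (univ.erase k) f v (fun k' _ => (hv k').1)
    rwa [hers, smul_eq_mul] at this
  have hhigh : ∑ k' ∈ univ.erase k, f k' ≤ m' * (v + 1) := by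
    have := Finset.sum_le_card_nsmul (univ.erase k) f (v + 1) (fun k' _ => (hv k').2)
    rwa [hers, smul_eq_mul] at this
  have hfk : f k = (univ.filter fun y => h y = k).card := rfl
  have hvk := hv k
  rcases (by omega : f k = v ∨ f k = v + 1) with hk | hk
  · left
    show f k = u / (m' + 1)
    rw [hk]
    symm
    apply Nat.div_eq_of_lt_le
    · calc v * (m' + 1) = v + m' * v := by ring
        _ ≤ u := by omega
    · calc u ≤ v + m' * (v+1) := by omega
        _ < (v + 1) * (m' + 1) := by nlinarith
  · right
    show f k = (u + (m' + 1) - 1) / (m' + 1)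
    rw [hk]
    symm
    apply Nat.div_eq_of_lt_le
    · calc (v + 1) * (m' + 1) = (v + 1) + m' * v + m' := by ring
        _ ≤ u + (m' + 1) - 1 := by omega
    · calc u + (m' + 1) - 1 ≤ m' * (v + 1) + (v + 1) + m' := by omega
        _ < (v + 2) * (m' + 1) := by nlinarith

lemma balanced_count_eq {u m n d : ℕ} (hm : 0 < m) (h₁ h₂ : Fin u → Fin m)
    (hb₁ : IsBalanced h₁) (hb₂ : IsBalanced h₂) :
    ((Sn u n).filter fun S => cost h₁ S ≤ d).card
      = ((Sn u n).filter fun S => cost h₂ S ≤ d).card := by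
  classical
  rcases eq_or_ne ((u + m - 1) / m) (u / m) with hwv | hwv
  · apply count_eq_of_fibers h₁ h₂ (Equiv.refl _)
    intro k
    have e1 : (univ.filter fun y => h₁ y = k).card = u / m := by
      rcases hb₁ k with hh | hh
      · exact hh
      · rw [hh, hwv]
    have e2 : (univ.filter fun y => h₂ y = k).card = u / m := by
      rcases hb₂ k with hh | hh
      · exact hh
      · rw [hh, hwv]
    simp only [Equiv.refl_apply]
    exact e1.trans e2.symm
  · have hw : (u + m - 1) / m = u / m + 1 := by
      rcases ceil_cases u m hm with hh | hh
      · exact absurd hh hwv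
      · exact hh
    have hcount : ∀ g : Fin u → Fin m, IsBalanced g →
        (univ.filter fun k : Fin m =>
          (univ.filter fun y => g y = k).card = (u + m - 1) / m).card = u - m * (u / m) := by
      intro g hg
      have hsum := fiber_sum g
      have hterm : ∀ k : Fin m, (univ.filter fun y => g y = k).card
          = u / m + (if (univ.filter fun y => g y = k).card = (u + m - 1) / m then 1 else 0) := by
        intro k
        rcases hg k with hh | hh
        · rw [if_neg (by omega), hh, Nat.add_zero]
        · rw [if_pos hh, hh, hw]
      rw [Finset.sum_congr rfl (fun k _ => hterm k), Finset.sum_add_distrib,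
        Finset.sum_const, card_univ, Fintype.card_fin, smul_eq_mul,
        Finset.sum_boole] at hsum
      simp only [Nat.cast_id] at hsum
      have hmle : m * (u / m) ≤ u := Nat.mul_div_le u m
      omega
    set t₁ := univ.filter fun k : Fin m =>
      (univ.filter fun y => h₁ y = k).card = (u + m - 1) / m with ht₁
    set t₂ := univ.filter fun k : Fin m =>
      (univ.filter fun y => h₂ y = k).card = (u + m - 1) / m with ht₂
    have hc12 : t₂.card = t₁.card := by rw [hcount h₁ hb₁, hcount h₂ hb₂]
    have e₁ : {k // k ∈ t₂} ≃ {k // k ∈ t₁} := Finset.equivOfCardEq hc12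
    have e₂ : {k // ¬ k ∈ t₂} ≃ {k // ¬ k ∈ t₁} := by
      apply Fintype.equivOfCardEq
      rw [Fintype.card_subtype_compl, Fintype.card_subtype_compl,
        Fintype.card_coe, Fintype.card_coe, hc12]
    set π : Equiv.Perm (Fin m) := Equiv.subtypeCongr e₁ e₂ with hπ
    apply count_eq_of_fibers h₁ h₂ π
    intro k
    by_cases hk : k ∈ t₂
    · have hπk : π k = (e₁ ⟨k, hk⟩ : Fin m) := by
        rw [hπ]
        simp [Equiv.subtypeCongr, Equiv.sumCompl_symm_apply_of_pos hk]
      have hmem : (π k) ∈ t₁ := by rw [hπk]; exact (e₁ ⟨k, hk⟩).2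
      rw [ht₁, mem_filter] at hmem
      rw [ht₂, mem_filter] at hk
      rw [hmem.2, hk.2]
    · have hπk : π k = (e₂ ⟨k, hk⟩ : Fin m) := by
        rw [hπ]
        simp [Equiv.subtypeCongr, Equiv.sumCompl_symm_apply_of_neg hk]
      have hmem : ¬ (π k) ∈ t₁ := by rw [hπk]; exact (e₂ ⟨k, hk⟩).2
      rw [ht₁, mem_filter] at hmem
      rw [ht₂, mem_filter] at hk
      have hne1 : (univ.filter fun y => h₁ y = π k).card ≠ (u + m - 1) / m :=
        fun hc => hmem ⟨mem_univ _, hc⟩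
      have hne2 : (univ.filter fun y => h₂ y = k).card ≠ (u + m - 1) / m :=
        fun hc => hk ⟨mem_univ _, hc⟩
      have hv1 : (univ.filter fun y => h₁ y = π k).card = u / m := by
        rcases hb₁ (π k) with hh | hh
        · exact hh
        · exact absurd hh hne1
      have hv2 : (univ.filter fun y => h₂ y = k).card = u / m := by
        rcases hb₂ k with hh | hh
        · exact hh
        · exact absurd hh hne2
      rw [hv1, hv2]

lemma exists_good {u m n d : ℕ} (hm : 0 < m) (hnu : n ≤ u) (hdvd : m ∣ n) (hnd : n / m ≤ d) :
    ∃ (h₀ : Fin u → Fin m) (S₀ : Finset (Fin u)), S₀ ∈ Sn u n ∧ cost h₀ S₀ ≤ d := by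
  refine ⟨fun y => ⟨y.val % m, Nat.mod_lt _ hm⟩, univ.filter fun y : Fin u => y.val < n, ?_, ?_⟩
  · rw [mem_Sn]
    rw [Finset.card_bij' (i := fun (y : Fin u) _ => y.val)
      (j := fun a (ha : a ∈ Finset.range n) =>
        (⟨a, lt_of_lt_of_le (Finset.mem_range.mp ha) hnu⟩ : Fin u))
      (t := Finset.range n) ?_ ?_ ?_ ?_]
    · exact Finset.card_range n
    · intro y hy
      rw [mem_filter] at hy
      exact Finset.mem_range.mpr hy.2
    · intro a ha
      rw [mem_filter]
      exact ⟨mem_univ _, Finset.mem_range.mp ha⟩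
    · intro y _
      rfl
    · intro a _
      rfl
  · rw [cost_le_iff]
    intro k
    refine le_trans (le_trans (Finset.card_le_card_of_injOn (fun y => y.val / m) ?_ ?_)
      (by rw [Finset.card_range])) hnd
    · intro y hy
      rw [mem_coe, mem_filter, mem_filter] at hy
      obtain ⟨⟨-, hylt⟩, hymod⟩ := hy
      exact Finset.mem_range.mpr (Nat.div_lt_div_of_lt_of_dvd hdvd hylt)
    · intro y₁ hy₁ y₂ hy₂ hdiv
      simp only [coe_filter, Set.mem_setOf_eq, Fin.ext_iff] at hy₁ hy₂
      have hdiv' : (y₁ : ℕ) / m = (y₂ : ℕ) / m := hdiv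
      have hpe : m * ((y₁ : ℕ) / m) = m * ((y₂ : ℕ) / m) := by rw [hdiv']
      have m₁ := Nat.div_add_mod (y₁ : ℕ) m
      have m₂ := Nat.div_add_mod (y₂ : ℕ) m
      apply Fin.ext
      omega

/-- **Balance maximizes `M_c`** (Theorem 3.3): a hash function hashes the maximum
possible number `M_c` of `n`-element subsets `c`-ideally iff it is balanced. -/
theorem balance_maximizes_Mc (u m n d : ℕ) (hu : 0 < u) (hm : 2 ≤ m) (hn : 0 < n)
    (hmn : m ≤ n) (hnu : n ^ 2 ≤ u) (hdvd : m ∣ n)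
    (hα : 1 ≤ n / m) (hαd : n / m ≤ d) (hdn : d < n) (hdβ : d < u / m)
    (h : Fin u → Fin m) :
    ((Sn u n).filter fun S => cost h S ≤ d).card = Mc u m n d ↔ IsBalanced h := by
  classical
  have hm0 : 0 < m := by omega
  have hd1 : 1 ≤ d := le_trans hα hαd
  haveI : Nonempty (Fin m) := ⟨⟨0, hm0⟩⟩
  haveI : Nonempty (Fin u → Fin m) := ⟨fun _ => ⟨0, hm0⟩⟩
  have hMcU : ∀ g : Fin u → Fin m,
      ((Sn u n).filter fun S => cost g S ≤ d).card ≤ Mc u m n d := fun g =>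
    Finset.le_sup (f := fun g : Fin u → Fin m =>
      ((Sn u n).filter fun S => cost g S ≤ d).card) (mem_univ g)
  have hMc1 : 1 ≤ Mc u m n d := by
    have hnu' : n ≤ u := le_trans (by nlinarith) hnu
    obtain ⟨h₀, S₀, hS₀, hc₀⟩ := exists_good hm0 hnu' hdvd hαd
    refine le_trans ?_ (hMcU h₀)
    exact Nat.one_le_iff_ne_zero.mpr (Finset.card_ne_zero_of_mem
      (mem_filter.mpr ⟨hS₀, hc₀⟩))
  have key : ∀ g : Fin u → Fin m, ¬ IsBalanced g →
      ((Sn u n).filter fun S => cost g S ≤ d).card < Mc u m n d := by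
    intro g hbal
    set f : Fin m → ℕ := fun k => (univ.filter fun y => g y = k).card with hf
    obtain ⟨imax, -, hsup'⟩ := Finset.exists_max_image (univ : Finset (Fin m)) f
      Finset.univ_nonempty
    obtain ⟨jmin, -, hinf'⟩ := Finset.exists_min_image (univ : Finset (Fin m)) f
      Finset.univ_nonempty
    have hsup : ∀ k, f k ≤ f imax := fun k => hsup' k (mem_univ k)
    have hinf : ∀ k, f jmin ≤ f k := fun k => hinf' k (mem_univ k)
    have hgap : f jmin + 2 ≤ f imax := by
      by_contra hcon
      push_neg at hcon
      refine hbal (balanced_of_tight hm0 g (f jmin) (fun k => ⟨hinf k, ?_⟩))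
      have h1 := hsup k
      have h2 : f k = (univ.filter fun y => g y = k).card := rfl
      omega
    have humax : u ≤ m * f imax := by
      have hsum : univ.sum f = u := fiber_sum g
      have hle := Finset.sum_le_card_nsmul univ f (f imax) (fun k _ => hsup k)
      rw [card_univ, Fintype.card_fin, smul_eq_mul] at hle
      omega
    have hdmax : d < f imax := by
      refine lt_of_lt_of_le hdβ ?_
      calc u / m ≤ (m * f imax) / m := Nat.div_le_div_right humax
        _ = f imax := Nat.mul_div_cancel_left _ hm0
    have hij : imax ≠ jmin := by
      intro hc
      rw [hc] at hgap
      omega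
    obtain ⟨x, hx⟩ := Finset.card_pos.mp (show 0 < f imax by omega)
    rw [mem_filter] at hx
    rcases Finset.eq_empty_or_nonempty ((Sn u n).filter fun S => cost g S ≤ d)
      with hemp | hne
    · rw [hemp, card_empty]
      exact hMc1
    · exact lt_of_lt_of_le
        (count_lt_exchange hij hx.2 hgap hdmax hd1 (by omega) hne) (hMcU _)
  constructor
  · intro hcount
    by_contra hbal
    exact absurd hcount (Nat.ne_of_lt (key h hbal))
  · intro hbal
    obtain ⟨hstar, -, hs⟩ := Finset.exists_mem_eq_sup (univ : Finset (Fin u → Fin m))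
      Finset.univ_nonempty
      (fun g : Fin u → Fin m => ((Sn u n).filter fun S => cost g S ≤ d).card)
    have hMceq : Mc u m n d = ((Sn u n).filter fun S => cost hstar S ≤ d).card := hs
    have hbstar : IsBalanced hstar := by
      by_contra hb
      have := key hstar hb
      omega
    rw [balanced_count_eq hm0 h hstar hbal hbstar, hMceq]
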